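/- For every starting point z = (x₀, y₀) with x₀ ≥ 1 and y₀ ≥ 1, the walk started at z almost surely hits the boundary in finite time: P_z(τ < ∞) = 1. -/

import Mathlib

/-- The step set of the walk: each increment is `(1,0)`, `(−1,1)` or `(0,−1)`. -/
def stepSet : Set (ℤ × ℤ) := {(1, 0), (-1, 1), (0, -1)}

/-- The boundary of the nonnegative quadrant: points with a zero coordinate. -/
def onBoundary (p : ℤ × ℤ) : Prop := p.1 = 0 ∨ p.2 = 0

/-- The position after `k` steps of the walk started at `z` with increment sequence `w`. -/
def walkPos (z : ℤ × ℤ) {n : ℕ} (w : Fin n → ℤ × ℤ) (k : ℕ) : ℤ × ℤ :=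
  z + ∑ i ∈ Finset.univ.filter (fun i : Fin n => (i : ℕ) < k), w i

/-- The number of `n`-step increment sequences (with steps in `stepSet`) whose walk started
at `z` stays off the boundary strictly before time `n` and whose position at time `n`
satisfies `P`.  Each such trajectory has probability `(1/3)^n` under the i.i.d. uniform
step distribution. -/
noncomputable def firstHitCount (z : ℤ × ℤ) (P : ℤ × ℤ → Prop) (n : ℕ) : ℕ :=
  Nat.card {w : Fin n → ℤ × ℤ //
    (∀ i, w i ∈ stepSet) ∧ (∀ k < n, ¬ onBoundary (walkPos z w k)) ∧ P (walkPos z w n)}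

/-- `hitProb z P = P_z(τ < ∞ and X_τ satisfies P)`: the probability that the walk started
at `z`, with i.i.d. increments uniform on `stepSet`, first hits the boundary `∂` at a point
satisfying `P`.  It is computed by decomposing the event over the value `n` of the hitting
time `τ`. -/
noncomputable def hitProb (z : ℤ × ℤ) (P : ℤ × ℤ → Prop) : ℝ :=
  ∑' n : ℕ, (1/3 : ℝ) ^ n * firstHitCount z P n

open Finset

def dstep : Fin 3 → ℤ := ![1, -1, 0]
def estep : Fin 3 → ℤ × ℤ := ![(1,0), (-1,1), (0,-1)]
def flip3 : Fin 3 → Fin 3 := ![1, 0, 2]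

def xsum {n : ℕ} (v : Fin n → Fin 3) (k : ℕ) : ℤ :=
  ∑ i ∈ Finset.univ.filter (fun i : Fin n => (i : ℕ) < k), dstep (v i)

def wpos (z : ℤ × ℤ) {n : ℕ} (v : Fin n → Fin 3) (k : ℕ) : ℤ × ℤ := walkPos z (estep ∘ v) k

open scoped Classical in
noncomputable def cntW (n : ℕ) (p : (Fin n → Fin 3) → Prop) : ℕ :=
  (Finset.univ.filter p).card

lemma estep_fst (a : Fin 3) : (estep a).1 = dstep a := by fin_cases a <;> rfl

lemma dstep_flip3 (a : Fin 3) : dstep (flip3 a) = - dstep a := by fin_cases a <;> rfl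

lemma flip3_flip3 (a : Fin 3) : flip3 (flip3 a) = a := by fin_cases a <;> rfl

lemma dstep_bounds (a : Fin 3) : -1 ≤ dstep a ∧ dstep a ≤ 1 := by fin_cases a <;> simp [dstep]

lemma xsum_zero {n : ℕ} (v : Fin n → Fin 3) : xsum v 0 = 0 := by
  simp [xsum]

lemma xsum_succ {n : ℕ} (v : Fin n → Fin 3) {k : ℕ} (hk : k < n) :
    xsum v (k + 1) = xsum v k + dstep (v ⟨k, hk⟩) := by
  unfold xsum
  have : Finset.univ.filter (fun i : Fin n => (i : ℕ) < k + 1)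
      = insert ⟨k, hk⟩ (Finset.univ.filter (fun i : Fin n => (i : ℕ) < k)) := by
    ext i
    simp only [mem_filter, mem_insert, mem_univ, true_and]
    constructor
    · intro h
      rcases Nat.lt_succ_iff_lt_or_eq.1 h with h | h
      · exact Or.inr h
      · exact Or.inl (Fin.ext h)
    · rintro (rfl | h)
      · exact Nat.lt_succ_self _
      · exact h.trans (Nat.lt_succ_self _)
  rw [this, Finset.sum_insert (by simp)]
  ring

lemma xsum_full {n : ℕ} (v : Fin n → Fin 3) : xsum v n = ∑ i, dstep (v i) := by
  unfold xsum
  congr 1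
  apply Finset.filter_true_of_mem
  intro i _
  exact i.2

lemma wpos_zero (z : ℤ × ℤ) {n : ℕ} (v : Fin n → Fin 3) : wpos z v 0 = z := by
  simp [wpos, walkPos]

lemma wpos_fst (z : ℤ × ℤ) {n : ℕ} (v : Fin n → Fin 3) (k : ℕ) :
    (wpos z v k).1 = z.1 + xsum v k := by
  unfold wpos walkPos xsum
  rw [Prod.fst_add]
  congr 1
  rw [show (∑ i ∈ Finset.univ.filter (fun i : Fin n => (i : ℕ) < k), (estep ∘ v) i).1
      = ∑ i ∈ Finset.univ.filter (fun i : Fin n => (i : ℕ) < k), (AddMonoidHom.fst ℤ ℤ) ((estep ∘ v) i)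
    from map_sum (AddMonoidHom.fst ℤ ℤ) _ _]
  simp [estep_fst]
open scoped Classical

lemma cntW_eq_sum (n : ℕ) (p : (Fin n → Fin 3) → Prop) :
    cntW n p = ∑ v : Fin n → Fin 3, if p v then 1 else 0 := by
  unfold cntW
  rw [Finset.card_filter]

lemma cntW_congr {n : ℕ} {p q : (Fin n → Fin 3) → Prop} (h : ∀ v, p v ↔ q v) :
    cntW n p = cntW n q := by
  rw [cntW_eq_sum, cntW_eq_sum]
  apply Finset.sum_congr rfl
  intro v _
  simp [h v]

lemma cntW_mono {n : ℕ} {p q : (Fin n → Fin 3) → Prop} (h : ∀ v, p v → q v) :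
    cntW n p ≤ cntW n q := by
  rw [cntW_eq_sum, cntW_eq_sum]
  apply Finset.sum_le_sum
  intro v _
  by_cases hv : p v
  · simp [hv, h v hv]
  · simp [hv]

lemma cntW_split {n : ℕ} (p q : (Fin n → Fin 3) → Prop) :
    cntW n p = cntW n (fun v => p v ∧ q v) + cntW n (fun v => p v ∧ ¬ q v) := by
  rw [cntW_eq_sum, cntW_eq_sum, cntW_eq_sum, ← Finset.sum_add_distrib]
  apply Finset.sum_congr rfl
  intro v _
  by_cases hp : p v <;> by_cases hq : q v <;> simp [hp, hq]

lemma cntW_true (n : ℕ) : cntW n (fun _ => True) = 3 ^ n := by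
  rw [cntW_eq_sum]
  simp [Finset.card_univ]

lemma cntW_le_total {n : ℕ} (p : (Fin n → Fin 3) → Prop) : cntW n p ≤ 3 ^ n := by
  rw [← cntW_true n]
  exact cntW_mono (fun v _ => trivial)

/-- generic: a predicate on length-`n+1` words that only depends on the first `n` letters. -/
lemma cntW_snoc {n : ℕ} (P : (Fin n → Fin 3) → Prop) (Q : (Fin (n+1) → Fin 3) → Prop)
    (hQ : ∀ v, Q v ↔ P (Fin.init v)) : cntW (n+1) Q = 3 * cntW n P := by
  unfold cntW
  have hprod : ∀ s : Finset (Fin n → Fin 3),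
      (s ×ˢ (Finset.univ : Finset (Fin 3))).card = 3 * s.card := by
    intro s
    rw [Finset.card_product]
    simp [mul_comm]
  rw [← hprod]
  apply Finset.card_bij' (fun v _ => (Fin.init v, v (Fin.last n))) (fun p _ => Fin.snoc p.1 p.2)
  · intro v hv
    simp only [Finset.mem_filter, Finset.mem_univ, true_and] at hv
    rw [Finset.mem_product]
    refine ⟨?_, Finset.mem_univ _⟩
    simp only [Finset.mem_filter, Finset.mem_univ, true_and]
    exact (hQ v).1 hv
  · intro p hp
    rw [Finset.mem_product] at hp
    obtain ⟨hp1, -⟩ := hp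
    simp only [Finset.mem_filter, Finset.mem_univ, true_and] at hp1 ⊢
    rw [hQ, Fin.init_snoc]
    exact hp1
  · intro v _
    exact Fin.snoc_init_self v
  · intro p _
    simp [Fin.init_snoc, Fin.snoc_last]

/-- generic injection bound. -/
lemma cntW_le_of_inj {n m : ℕ} (P : (Fin n → Fin 3) → Prop) (Q : (Fin m → Fin 3) → Prop)
    (f : (Fin n → Fin 3) → (Fin m → Fin 3)) (hf : ∀ v, P v → Q (f v))
    (hinj : ∀ v w, P v → P w → f v = f w → v = w) : cntW n P ≤ cntW m Q := by
  unfold cntW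
  apply Finset.card_le_card_of_injOn f
  · intro v hv
    simp only [Finset.mem_coe, Finset.mem_filter, Finset.mem_univ, true_and] at hv ⊢
    exact hf v hv
  · intro v hv w hw h
    simp only [Finset.coe_filter, Finset.mem_univ, true_and, Set.mem_setOf_eq] at hv hw
    exact hinj v w hv hw h

/-- generic fiberwise bound. -/
lemma cntW_le_sum_fibers {n : ℕ} (P : (Fin n → Fin 3) → Prop) (g : (Fin n → Fin 3) → ℤ)
    (s : Finset ℤ) (hg : ∀ v, P v → g v ∈ s) :
    cntW n P ≤ ∑ t ∈ s, cntW n (fun v => g v = t) := by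
  unfold cntW
  rw [Finset.card_eq_sum_card_fiberwise (f := g) (t := s)]
  · apply Finset.sum_le_sum
    intro t _
    apply Finset.card_le_card
    intro v hv
    simp only [Finset.mem_filter, Finset.mem_univ, true_and] at hv ⊢
    exact hv.2
  · intro v hv
    simp only [Finset.mem_coe, Finset.mem_filter, Finset.mem_univ, true_and] at hv
    exact hg v hv

-- position after k ≤ n steps only depends on the first n letters
lemma xsum_init {n : ℕ} (v : Fin (n+1) → Fin 3) {k : ℕ} (hk : k ≤ n) :
    xsum (Fin.init v) k = xsum v k := by
  unfold xsum
  rw [Finset.sum_filter, Finset.sum_filter, Fin.sum_univ_castSucc]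
  have hlast : ¬ ((Fin.last n : Fin (n+1)) : ℕ) < k := by
    simp only [Fin.val_last]
    omega
  rw [if_neg hlast, add_zero]
  apply Finset.sum_congr rfl
  intro i _
  simp [Fin.init, Fin.coe_castSucc]

lemma wpos_init (z : ℤ × ℤ) {n : ℕ} (v : Fin (n+1) → Fin 3) {k : ℕ} (hk : k ≤ n) :
    wpos z (Fin.init v) k = wpos z v k := by
  unfold wpos walkPos
  congr 1
  rw [Finset.sum_filter, Finset.sum_filter,
    Fin.sum_univ_castSucc (f := fun i => if ((i : Fin (n+1)) : ℕ) < k then (estep ∘ v) i else 0)]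
  have hlast : ¬ ((Fin.last n : Fin (n+1)) : ℕ) < k := by
    simp only [Fin.val_last]
    omega
  rw [if_neg hlast, add_zero]
  apply Finset.sum_congr rfl
  intro i _
  simp [Fin.init, Fin.coe_castSucc]

noncomputable def survC (z : ℤ × ℤ) (n : ℕ) : ℕ :=
  cntW n (fun v => ∀ k ≤ n, ¬ onBoundary (wpos z v k))

noncomputable def hitC (z : ℤ × ℤ) (n : ℕ) : ℕ :=
  cntW n (fun v => (∀ k < n, ¬ onBoundary (wpos z v k)) ∧ onBoundary (wpos z v n))

lemma survC_recursion (z : ℤ × ℤ) (n : ℕ) :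
    3 * survC z n = survC z (n+1) + hitC z (n+1) := by
  have key : cntW (n+1) (fun v => ∀ k ≤ n, ¬ onBoundary (wpos z v k)) = 3 * survC z n := by
    apply cntW_snoc
    intro v
    constructor
    · intro h k hk
      rw [wpos_init z v hk]
      exact h k hk
    · intro h k hk
      rw [← wpos_init z v hk]
      exact h k hk
  have e1 : cntW (n+1) (fun v => (∀ k ≤ n, ¬ onBoundary (wpos z v k)) ∧
      onBoundary (wpos z v (n+1))) = hitC z (n+1) := by
    apply cntW_congr
    intro v
    constructor
    · rintro ⟨h1, h2⟩
      exact ⟨fun k hk => h1 k (by omega), h2⟩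
    · rintro ⟨h1, h2⟩
      exact ⟨fun k hk => h1 k (by omega), h2⟩
  have e2 : cntW (n+1) (fun v => (∀ k ≤ n, ¬ onBoundary (wpos z v k)) ∧
      ¬ onBoundary (wpos z v (n+1))) = survC z (n+1) := by
    apply cntW_congr
    intro v
    constructor
    · rintro ⟨h1, h2⟩
      intro k hk
      by_cases hk' : k ≤ n
      · exact h1 k hk'
      · have : k = n + 1 := by omega
        rw [this]
        exact h2
    · intro h
      exact ⟨fun k hk => h k (by omega), h (n+1) le_rfl⟩
  rw [← key, cntW_split (n := n+1) (fun v => ∀ k ≤ n, ¬ onBoundary (wpos z v k))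
    (fun v => onBoundary (wpos z v (n+1))), e1, e2]
  omega

lemma survC_zero (z : ℤ × ℤ) (hz : ¬ onBoundary z) : survC z 0 = 1 := by
  unfold survC
  rw [cntW_eq_sum]
  rw [Finset.sum_eq_single_of_mem (Fin.elim0) (Finset.mem_univ _)]
  · have : ∀ k ≤ 0, ¬ onBoundary (wpos z Fin.elim0 k) := by
      intro k hk
      interval_cases k
      rw [wpos_zero]
      exact hz
    simp [this]
  · intro w _ hw
    exact absurd (funext fun i => i.elim0) hw

lemma hitC_zero (z : ℤ × ℤ) (hz : ¬ onBoundary z) : hitC z 0 = 0 := by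
  unfold hitC
  rw [cntW_eq_sum]
  apply Finset.sum_eq_zero
  intro v _
  have : ¬ onBoundary (wpos z v 0) := by
    rw [wpos_zero]
    exact hz
  simp [this]
lemma partial_sum_eq (z : ℤ × ℤ) (hz : ¬ onBoundary z) (n : ℕ) :
    ∑ m ∈ Finset.range (n+1), (1/3 : ℝ) ^ m * hitC z m = 1 - survC z n / 3 ^ n := by
  induction n with
  | zero => simp [hitC_zero z hz, survC_zero z hz]
  | succ n ih =>
    rw [Finset.sum_range_succ, ih]
    have hrec := survC_recursion z n
    have : (survC z (n+1) : ℝ) = 3 * survC z n - hitC z (n+1) := by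
      have := congrArg (fun m : ℕ => (m : ℝ)) hrec
      push_cast at this
      linarith
    have h3 : (3 : ℝ) ^ (n+1) = 3 * 3 ^ n := by ring
    rw [this, one_div_pow, h3]
    have hp : (3:ℝ)^n ≠ 0 := by positivity
    field_simp
    ring

/-- 2D survival is bounded by 1D survival of the first coordinate. -/
lemma survC_le_surv1 (z : ℤ × ℤ) (hx : 1 ≤ z.1) (n : ℕ) :
    survC z n ≤ cntW n (fun v => ∀ k ≤ n, 1 ≤ z.1 + xsum v k) := by
  apply cntW_mono
  intro v hv k hk
  induction k with
  | zero => simpa [xsum_zero] using hx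
  | succ k ih =>
    have hkn : k < n := by omega
    have h1 : 1 ≤ z.1 + xsum v k := ih (by omega)
    have h2 : (wpos z v (k+1)).1 ≠ 0 := by
      intro h
      exact hv (k+1) hk (Or.inl h)
    rw [wpos_fst] at h2
    rw [xsum_succ v hkn] at h2 ⊢
    have := dstep_bounds (v ⟨k, hkn⟩)
    omega

/-! ### Reflection for the 1D walk -/

def NSpred (a : ℤ) (n : ℕ) (v : Fin n → Fin 3) : Prop := ∃ k, k ≤ n ∧ a + xsum v k = 0

noncomputable def reflW (a : ℤ) {n : ℕ} (v : Fin n → Fin 3) : Fin n → Fin 3 :=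
  if h : NSpred a n v then (fun i => if i.1 < Nat.find h then v i else flip3 (v i)) else v

lemma reflW_apply {a : ℤ} {n : ℕ} {v : Fin n → Fin 3} (h : NSpred a n v) :
    reflW a v = fun i => if i.1 < Nat.find h then v i else flip3 (v i) := by
  unfold reflW
  rw [dif_pos h]

lemma reflW_xsum_le {a : ℤ} {n : ℕ} {v : Fin n → Fin 3} (h : NSpred a n v) {k : ℕ}
    (hk : k ≤ Nat.find h) : xsum (reflW a v) k = xsum v k := by
  unfold xsum
  apply Finset.sum_congr rfl
  intro i hi
  simp only [Finset.mem_filter, Finset.mem_univ, true_and] at hi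
  rw [reflW_apply h]
  simp only []
  rw [if_pos (by omega)]

lemma reflW_xsum_ge {a : ℤ} {n : ℕ} {v : Fin n → Fin 3} (h : NSpred a n v) {k : ℕ}
    (hk : Nat.find h ≤ k) (hkn : k ≤ n) :
    a + xsum (reflW a v) k = -(a + xsum v k) := by
  induction k, hk using Nat.le_induction with
  | base =>
    rw [reflW_xsum_le h le_rfl]
    have := (Nat.find_spec h).2
    omega
  | succ k hk ih =>
    have hkn' : k < n := by omega
    have ihv := ih (by omega)
    rw [xsum_succ _ hkn', xsum_succ _ hkn']
    have hre : reflW a v ⟨k, hkn'⟩ = flip3 (v ⟨k, hkn'⟩) := by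
      rw [reflW_apply h]
      simp only []
      exact if_neg (Nat.not_lt.2 hk)
    rw [hre, dstep_flip3]
    omega

lemma ns_reflW {a : ℤ} {n : ℕ} {v : Fin n → Fin 3} (h : NSpred a n v) :
    NSpred a n (reflW a v) := by
  refine ⟨Nat.find h, (Nat.find_spec h).1, ?_⟩
  rw [reflW_xsum_le h le_rfl]
  exact (Nat.find_spec h).2

lemma find_reflW {a : ℤ} {n : ℕ} {v : Fin n → Fin 3} (h : NSpred a n v) :
    Nat.find (ns_reflW h) = Nat.find h := by
  have h1 : Nat.find (ns_reflW h) ≤ Nat.find h := by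
    apply Nat.find_le
    refine ⟨(Nat.find_spec h).1, ?_⟩
    rw [reflW_xsum_le h le_rfl]
    exact (Nat.find_spec h).2
  have h2 : Nat.find h ≤ Nat.find (ns_reflW h) := by
    apply Nat.find_min' h
    have hs := Nat.find_spec (ns_reflW h)
    refine ⟨hs.1, ?_⟩
    rw [← reflW_xsum_le h h1]
    exact hs.2
  omega

lemma reflW_invol {a : ℤ} {n : ℕ} {v : Fin n → Fin 3} (h : NSpred a n v) :
    reflW a (reflW a v) = v := by
  funext i
  rw [reflW_apply (ns_reflW h), find_reflW h, reflW_apply h]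
  by_cases hi : (i : ℕ) < Nat.find h
  · simp [hi]
  · simp [hi, flip3_flip3]

lemma exists_zero {a : ℤ} (ha : 1 ≤ a) {n : ℕ} {v : Fin n → Fin 3} {m : ℕ} (hm : m ≤ n)
    (hle : a + xsum v m ≤ 0) : NSpred a n v := by
  induction m with
  | zero =>
    rw [xsum_zero] at hle
    omega
  | succ m ih =>
    by_cases hm' : a + xsum v m ≤ 0
    · exact ih (by omega) hm'
    · refine ⟨m+1, hm, ?_⟩
      have hmn : m < n := by omega
      rw [xsum_succ v hmn] at hle ⊢
      have := dstep_bounds (v ⟨m, hmn⟩)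
      omega

lemma xsum_flipAll {n : ℕ} (v : Fin n → Fin 3) (k : ℕ) :
    xsum (flip3 ∘ v) k = - xsum v k := by
  unfold xsum
  rw [← Finset.sum_neg_distrib]
  apply Finset.sum_congr rfl
  intro i _
  exact dstep_flip3 (v i)

lemma cntW_reflect {a : ℤ} (ha : 1 ≤ a) (n : ℕ) :
    cntW n (fun v => a + 1 ≤ xsum v n) ≤
      cntW n (fun v => NSpred a n v ∧ 1 ≤ a + xsum v n) := by
  apply cntW_le_of_inj _ _ (fun v => reflW a (flip3 ∘ v))
  · intro v hv
    have hNS : NSpred a n (flip3 ∘ v) := by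
      apply exists_zero ha le_rfl
      rw [xsum_flipAll]
      omega
    refine ⟨ns_reflW hNS, ?_⟩
    have := reflW_xsum_ge hNS (Nat.find_spec hNS).1 le_rfl
    rw [xsum_flipAll] at this
    omega
  · intro v w hv hw hvw
    have hNSv : NSpred a n (flip3 ∘ v) := by
      apply exists_zero ha le_rfl
      rw [xsum_flipAll]
      omega
    have hNSw : NSpred a n (flip3 ∘ w) := by
      apply exists_zero ha le_rfl
      rw [xsum_flipAll]
      omega
    have : (flip3 ∘ v) = (flip3 ∘ w) := by
      rw [← reflW_invol hNSv, ← reflW_invol hNSw, hvw]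
    funext i
    have := congrFun this i
    simp only [Function.comp_apply] at this
    have := congrArg flip3 this
    rwa [flip3_flip3, flip3_flip3] at this

/-- the key reflection bound : 1D survival count is at most the count of walks ending
in the window `[1-a, a]`. -/
lemma surv1_le_window {a : ℤ} (ha : 1 ≤ a) (n : ℕ) :
    cntW n (fun v => ∀ k ≤ n, 1 ≤ a + xsum v k) ≤
      ∑ t ∈ Finset.Icc (1 - a) a, cntW n (fun v => xsum v n = t) := by
  have E1 := cntW_split (n := n) (fun v => 1 ≤ a + xsum v n) (fun v => NSpred a n v)
  have E2 := cntW_split (n := n) (fun v => 1 ≤ a + xsum v n) (fun v => a + xsum v n ≤ 2*a)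
  have I0 : cntW n (fun v => ∀ k ≤ n, 1 ≤ a + xsum v k) ≤
      cntW n (fun v => 1 ≤ a + xsum v n ∧ ¬ NSpred a n v) := by
    apply cntW_mono
    intro v hv
    refine ⟨hv n le_rfl, ?_⟩
    rintro ⟨k, hk, h0⟩
    have := hv k hk
    omega
  have I1 : cntW n (fun v => 1 ≤ a + xsum v n ∧ ¬ (a + xsum v n ≤ 2*a)) ≤
      cntW n (fun v => a + 1 ≤ xsum v n) := by
    apply cntW_mono
    intro v hv
    omega
  have I2 : cntW n (fun v => NSpred a n v ∧ 1 ≤ a + xsum v n) =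
      cntW n (fun v => 1 ≤ a + xsum v n ∧ NSpred a n v) := by
    apply cntW_congr
    intro v
    exact and_comm
  have A := cntW_reflect ha n
  have I3 : cntW n (fun v => 1 ≤ a + xsum v n ∧ a + xsum v n ≤ 2*a) ≤
      ∑ t ∈ Finset.Icc (1 - a) a, cntW n (fun v => xsum v n = t) := by
    apply cntW_le_sum_fibers _ (fun v => xsum v n)
    intro v hv
    rw [Finset.mem_Icc]
    omega
  omega
/-! ### Cauchy–Schwarz step -/

lemma cntW_sq_le {n : ℕ} (t : ℤ) :
    cntW n (fun v => xsum v n = t) * cntW n (fun v => xsum v n = t) ≤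
      cntW (n+n) (fun w => xsum w (n+n) = 0) := by
  unfold cntW
  rw [← Finset.card_product]
  apply Finset.card_le_card_of_injOn (fun p => Fin.append p.1 (flip3 ∘ p.2))
  · rintro ⟨u, v⟩ hp
    rw [Finset.mem_coe, Finset.mem_product] at hp
    obtain ⟨hu, hv⟩ := hp
    simp only [Finset.mem_coe, Finset.mem_filter, Finset.mem_univ, true_and] at hu hv ⊢
    rw [xsum_full, Fin.sum_univ_add]
    have h1 : ∀ i : Fin n, dstep (Fin.append u (flip3 ∘ v) (Fin.castAdd n i)) = dstep (u i) := by
      intro i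
      rw [Fin.append_left]
    have h2 : ∀ i : Fin n, dstep (Fin.append u (flip3 ∘ v) (Fin.natAdd n i)) =
        - dstep (v i) := by
      intro i
      rw [Fin.append_right]
      exact dstep_flip3 (v i)
    rw [Finset.sum_congr rfl (fun i _ => h1 i), Finset.sum_congr rfl (fun i _ => h2 i)]
    rw [Finset.sum_neg_distrib]
    rw [← xsum_full, ← xsum_full, hu, hv]
    ring
  · rintro ⟨u, v⟩ hu ⟨u', v'⟩ hv h
    simp only [Prod.mk.injEq]
    constructor
    · funext i
      have := congrFun h (Fin.castAdd n i)
      simp only [] at this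
      rwa [Fin.append_left, Fin.append_left] at this
    · funext i
      have := congrFun h (Fin.natAdd n i)
      simp only [] at this
      rw [Fin.append_right, Fin.append_right] at this
      simp only [Function.comp_apply] at this
      have := congrArg flip3 this
      rwa [flip3_flip3, flip3_flip3] at this

/-! ### counting words with zero sum -/

lemma xsum_eq_cards {N : ℕ} (w : Fin N → Fin 3) :
    xsum w N = (Finset.univ.filter (fun i => w i = 0)).card
      - (Finset.univ.filter (fun i => w i = 1)).card := by
  rw [xsum_full]
  have key : ∀ b : Fin 3, dstep b =
      (if b = 0 then (1 : ℤ) else 0) + (- if b = 1 then (1 : ℤ) else 0) := by decide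
  rw [Finset.sum_congr rfl (fun i _ => key (w i)), Finset.sum_add_distrib,
    Finset.sum_neg_distrib, Finset.sum_boole, Finset.sum_boole]
  rfl

lemma cntW_zero_le_pairs (N : ℕ) :
    cntW N (fun w => xsum w N = 0) ≤
      ∑ k ∈ Finset.range (N+1), N.choose (2*k) * (2*k).choose k := by
  classical
  set T : Finset (Finset (Fin N) × Finset (Fin N)) :=
    Finset.univ.filter (fun p => Disjoint p.1 p.2 ∧ p.1.card = p.2.card) with hT
  have step1 : cntW N (fun w => xsum w N = 0) ≤ T.card := by
    unfold cntW
    apply Finset.card_le_card_of_injOn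
      (fun w => (Finset.univ.filter (fun i => w i = 0), Finset.univ.filter (fun i => w i = 1)))
    · intro w hw
      simp only [Finset.mem_coe, Finset.mem_filter, Finset.mem_univ, true_and] at hw
      rw [hT]
      simp only [Finset.mem_coe, Finset.mem_filter, Finset.mem_univ, true_and]
      constructor
      · rw [Finset.disjoint_left]
        intro i hi1 hi2
        simp only [Finset.mem_filter, Finset.mem_univ, true_and] at hi1 hi2
        rw [hi1] at hi2
        exact absurd hi2 (by decide)
      · have := xsum_eq_cards w
        rw [hw] at this
        omega
    · intro w hw w' hw' h
      simp only [Prod.mk.injEq] at h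
      obtain ⟨hA, hB⟩ := h
      rw [Finset.ext_iff] at hA hB
      funext i
      have hA' := hA i
      have hB' := hB i
      simp only [Finset.mem_filter, Finset.mem_univ, true_and] at hA' hB'
      have h3 : ∀ b c : Fin 3, (b = 0 ↔ c = 0) → (b = 1 ↔ c = 1) → b = c := by decide
      exact h3 _ _ hA' hB'
  have step2 : T.card ≤ ∑ k ∈ Finset.range (N+1), N.choose (2*k) * (2*k).choose k := by
    rw [Finset.card_eq_sum_card_fiberwise (f := fun p => p.1.card) (t := Finset.range (N+1))
      (fun p _ => Finset.mem_range.2 (Nat.lt_succ_of_le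
        (le_trans (Finset.card_le_univ p.1) (by simp))))]
    apply Finset.sum_le_sum
    intro k _
    have hfib : (T.filter (fun p => p.1.card = k)).card ≤ N.choose k * (N - k).choose k := by
      rw [Finset.card_eq_sum_card_fiberwise (f := Prod.fst)
        (t := Finset.powersetCard k Finset.univ) ?hmem]
      case hmem =>
        intro p hp
        simp only [Finset.mem_coe, Finset.mem_filter] at hp ⊢
        rw [Finset.mem_powersetCard_univ]
        exact hp.2
      have hA : ∀ A ∈ Finset.powersetCard k Finset.univ,
          ((T.filter (fun p => p.1.card = k)).filter (fun p => p.1 = A)).card ≤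
            (N - k).choose k := by
        intro A hA
        rw [Finset.mem_powersetCard_univ] at hA
        have : ((T.filter (fun p => p.1.card = k)).filter (fun p => p.1 = A)).card ≤
            (Finset.powersetCard k Aᶜ).card := by
          apply Finset.card_le_card_of_injOn (fun p => p.2)
          · intro p hp
            simp only [Finset.mem_coe, Finset.mem_filter, hT, Finset.mem_univ, true_and] at hp
            obtain ⟨⟨⟨hdisj, hcard⟩, hk⟩, hpA⟩ := hp
            rw [Finset.mem_coe, Finset.mem_powersetCard]
            constructor
            · intro i hi
              rw [Finset.mem_compl, ← hpA]
              exact fun hiA => (Finset.disjoint_left.1 hdisj) hiA hi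
            · show p.2.card = k
              omega
          · intro p hp q hq h
            simp only [Finset.mem_coe, Finset.mem_filter] at hp hq
            exact Prod.ext (hp.2.trans hq.2.symm) h
        rw [Finset.card_powersetCard, Finset.card_compl, Fintype.card_fin, hA] at this
        exact this
      calc ∑ A ∈ Finset.powersetCard k Finset.univ,
            ((T.filter (fun p => p.1.card = k)).filter (fun p => p.1 = A)).card
          ≤ ∑ A ∈ Finset.powersetCard k Finset.univ, (N - k).choose k :=
            Finset.sum_le_sum hA
        _ = N.choose k * (N - k).choose k := by
            rw [Finset.sum_const, Finset.card_powersetCard, Finset.card_univ, Fintype.card_fin,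
              smul_eq_mul]
    refine hfib.trans (le_of_eq ?_)
    by_cases h2k : 2 * k ≤ N
    · rw [Nat.choose_mul (n := N) (k := 2*k) (s := k) (by omega)]
      congr 1
      · congr 1
        omega
    · rcases Nat.lt_or_ge N k with hk | hk
      · rw [Nat.choose_eq_zero_of_lt hk, Nat.choose_eq_zero_of_lt (show N < 2*k by omega)]
        simp
      · rw [Nat.choose_eq_zero_of_lt (show N - k < k by omega),
          Nat.choose_eq_zero_of_lt (show N < 2*k by omega)]
        simp
  exact step1.trans step2
/-! ### numeric estimates -/

lemma centralBinom_sq_bound (k : ℕ) : Nat.centralBinom k ^ 2 * (k+1) ≤ 16 ^ k := by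
  induction k with
  | zero => simp [Nat.centralBinom]
  | succ k ih =>
    have h1 := Nat.succ_mul_centralBinom_succ k
    have key : (2*k+1)^2*(k+2) ≤ 4*(k+1)^3 := by nlinarith [sq_nonneg k]
    have hpos : 0 < (k+1)^2 := by positivity
    apply Nat.le_of_mul_le_mul_left _ hpos
    calc (k+1)^2 * (Nat.centralBinom (k+1) ^ 2 * (k+1+1))
        = ((k+1) * Nat.centralBinom (k+1))^2 * (k+2) := by ring
      _ = (2*(2*k+1) * Nat.centralBinom k)^2 * (k+2) := by rw [h1]
      _ = ((2*k+1)^2*(k+2)) * (4 * Nat.centralBinom k ^ 2) := by ring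
      _ ≤ (4*(k+1)^3) * (4 * Nat.centralBinom k ^ 2) := Nat.mul_le_mul key (le_refl _)
      _ = (16*(k+1)^2) * (Nat.centralBinom k ^ 2 * (k+1)) := by ring
      _ ≤ (16*(k+1)^2) * 16^k := Nat.mul_le_mul (le_refl _) ih
      _ = (k+1)^2 * 16^(k+1) := by rw [pow_succ]; ring

lemma choose_le_two_pow (n k : ℕ) : n.choose k ≤ 2^n := by
  by_cases h : k ≤ n
  · calc n.choose k ≤ ∑ m ∈ Finset.range (n+1), n.choose m :=
        Finset.single_le_sum (f := fun m => n.choose m) (fun _ _ => Nat.zero_le _)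
          (Finset.mem_range.2 (Nat.lt_succ_of_le h))
    _ = 2^n := Nat.sum_range_choose n
  · rw [Nat.choose_eq_zero_of_lt (by omega)]
    exact Nat.zero_le _

lemma centralBinom_real_bound (k : ℕ) :
    (Nat.centralBinom k : ℝ) * Real.sqrt (k+1) ≤ 4^k := by
  have h := centralBinom_sq_bound k
  have hR : (Nat.centralBinom k : ℝ)^2 * (k+1) ≤ 16^k := by exact_mod_cast h
  have h16 : (16 : ℝ)^k = ((4:ℝ)^k)^2 := by
    rw [show (16:ℝ) = 4^2 by norm_num, ← pow_mul, ← pow_mul, Nat.mul_comm 2 k]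
  have hsq : ((Nat.centralBinom k : ℝ) * Real.sqrt (k+1))^2 ≤ ((4:ℝ)^k)^2 := by
    rw [mul_pow, Real.sq_sqrt (by positivity)]
    rw [← h16]
    exact hR
  have h1 : (0:ℝ) ≤ (Nat.centralBinom k : ℝ) * Real.sqrt (k+1) := by positivity
  have h2 : (0:ℝ) ≤ (4:ℝ)^k := by positivity
  nlinarith [hsq]

lemma central_le_sqrt_bound {n k : ℕ} (hk : n < 2*k) :
    ((2*k).choose k : ℝ) ≤ 4^k * Real.sqrt (2/(n+2)) := by
  have hc : ((2*k).choose k : ℝ) = (Nat.centralBinom k : ℝ) := by rw [Nat.centralBinom]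
  rw [hc]
  have hs : (0:ℝ) < Real.sqrt (k+1) := Real.sqrt_pos.2 (by positivity)
  have h1 : (Nat.centralBinom k : ℝ) ≤ 4^k / Real.sqrt (k+1) :=
    (le_div_iff₀ hs).2 (centralBinom_real_bound k)
  refine h1.trans ?_
  rw [div_eq_mul_inv]
  apply mul_le_mul_of_nonneg_left _ (by positivity)
  rw [← Real.sqrt_inv]
  apply Real.sqrt_le_sqrt
  rw [inv_eq_one_div]
  rw [div_le_div_iff₀ (by positivity) (by positivity)]
  have : (n:ℝ) + 2 ≤ 2*((k:ℝ)+1) := by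
    have : (n:ℝ) < 2*k := by exact_mod_cast hk
    linarith
  linarith

lemma sum_even_binom_le (n : ℕ) :
    ∑ k ∈ Finset.range (2*n+1), (2*n).choose (2*k) * 2^(2*k) ≤ 9^n := by
  have himg : ∑ k ∈ Finset.range (2*n+1), (2*n).choose (2*k) * 2^(2*k)
      = ∑ j ∈ (Finset.range (2*n+1)).image (fun k => 2*k), (2*n).choose j * 2^j := by
    rw [Finset.sum_image (by intro a _ b _ h; simp only at h; omega)]
  rw [himg]
  have hsub : (Finset.range (2*n+1)).image (fun k => 2*k) ⊆ Finset.range (2*(2*n+1)) := by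
    intro j hj
    simp only [Finset.mem_image, Finset.mem_range] at hj ⊢
    obtain ⟨k, hk, rfl⟩ := hj
    omega
  calc ∑ j ∈ (Finset.range (2*n+1)).image (fun k => 2*k), (2*n).choose j * 2^j
      ≤ ∑ j ∈ Finset.range (2*(2*n+1)), (2*n).choose j * 2^j :=
        Finset.sum_le_sum_of_subset hsub
    _ = ∑ j ∈ Finset.range (2*n+1), (2*n).choose j * 2^j := by
        symm
        apply Finset.sum_subset
        · intro j hj
          simp only [Finset.mem_range] at hj ⊢
          omega
        · intro j _ hj
          simp only [Finset.mem_range] at hj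
          rw [Nat.choose_eq_zero_of_lt (by omega)]
          ring
    _ = 9^n := by
        have := add_pow 2 1 (2*n) (R := ℕ)
        simp only [one_pow, mul_one, one_mul] at this
        have h23 : (2 + 1 : ℕ) = 3 := by norm_num
        rw [h23] at this
        have h9 : (9:ℕ)^n = 3^(2*n) := by
          rw [show (9:ℕ) = 3^2 by norm_num, ← pow_mul, Nat.mul_comm]
        rw [h9, this]
        apply Finset.sum_congr rfl
        intro j _
        simp only [Nat.cast_id]
        ring

/-- the master count bound. -/
lemma cntW_zero_real_bound (n : ℕ) :
    (cntW (n+n) (fun w => xsum w (n+n) = 0) : ℝ) ≤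
      (2*n+1) * 8^n + 9^n * Real.sqrt (2/(n+2)) := by
  have h0 := cntW_zero_le_pairs (n+n)
  have hNN : n + n = 2*n := by ring
  have hcast : (cntW (n+n) (fun w => xsum w (n+n) = 0) : ℝ) ≤
      ∑ k ∈ Finset.range (2*n+1), (((2*n).choose (2*k) * (2*k).choose k : ℕ) : ℝ) := by
    rw [← Nat.cast_sum]
    exact_mod_cast (by rw [← hNN] ; exact_mod_cast h0)
  refine hcast.trans ?_
  have hterm : ∀ k ∈ Finset.range (2*n+1),
      (((2*n).choose (2*k) * (2*k).choose k : ℕ) : ℝ) ≤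
        8^n + ((2*n).choose (2*k) * 2^(2*k) : ℕ) * Real.sqrt (2/(n+2)) := by
    intro k _
    by_cases hk : 2*k ≤ n
    · have b1 : (2*n).choose (2*k) ≤ 2^(2*n) := choose_le_two_pow _ _
      have b2 : (2*k).choose k ≤ 2^n := le_trans (choose_le_two_pow _ _)
        (Nat.pow_le_pow_right (by norm_num) (by omega))
      have : (2*n).choose (2*k) * (2*k).choose k ≤ 2^(2*n) * 2^n :=
        Nat.mul_le_mul b1 b2
      have h8 : (2:ℕ)^(2*n) * 2^n = 8^n := by
        rw [← pow_add, show (8:ℕ) = 2^3 by norm_num, ← pow_mul]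
        congr 1
        omega
      rw [h8] at this
      have : (((2*n).choose (2*k) * (2*k).choose k : ℕ) : ℝ) ≤ (8:ℝ)^n := by
        exact_mod_cast this
      refine this.trans ?_
      have : (0:ℝ) ≤ ((2*n).choose (2*k) * 2^(2*k) : ℕ) * Real.sqrt (2/(n+2)) := by
        positivity
      linarith
    · push_cast
      have hb := central_le_sqrt_bound (show n < 2*k by omega)
      calc ((2*n).choose (2*k) : ℝ) * ((2*k).choose k : ℝ)
          ≤ ((2*n).choose (2*k) : ℝ) * (4^k * Real.sqrt (2/(n+2))) := by
            apply mul_le_mul_of_nonneg_left hb (by positivity)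
        _ = ((2*n).choose (2*k) : ℝ) * 2^(2*k) * Real.sqrt (2/(n+2)) := by
            rw [show (4:ℝ)^k = 2^(2*k) by rw [pow_mul]; norm_num]
            ring
        _ ≤ 8^n + ((2*n).choose (2*k) : ℝ) * 2^(2*k) * Real.sqrt (2/(n+2)) := by
            have : (0:ℝ) ≤ (8:ℝ)^n := by positivity
            linarith
  refine (Finset.sum_le_sum hterm).trans ?_
  rw [Finset.sum_add_distrib, Finset.sum_const, Finset.card_range]
  have : ∑ k ∈ Finset.range (2*n+1), (((2*n).choose (2*k) * 2^(2*k) : ℕ) : ℝ) *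
      Real.sqrt (2/(n+2)) ≤ 9^n * Real.sqrt (2/(n+2)) := by
    rw [← Finset.sum_mul]
    apply mul_le_mul_of_nonneg_right _ (Real.sqrt_nonneg _)
    rw [← Nat.cast_sum]
    have := sum_even_binom_le n
    exact_mod_cast this
  calc (2*n+1) • ((8:ℝ)^n) + ∑ k ∈ Finset.range (2*n+1),
        (((2*n).choose (2*k) * 2^(2*k) : ℕ) : ℝ) * Real.sqrt (2/(n+2))
      ≤ (2*n+1) • ((8:ℝ)^n) + 9^n * Real.sqrt (2/(n+2)) := by linarith
    _ = (2*n+1) * 8^n + 9^n * Real.sqrt (2/(n+2)) := by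
        rw [nsmul_eq_mul]
        push_cast
        ring
/-! ### the final real bound on survival -/

noncomputable def gseq (n : ℕ) : ℝ := (2*n+1) * (8/9)^n + Real.sqrt (2/(n+2))

lemma gseq_nonneg (n : ℕ) : 0 ≤ gseq n := by
  unfold gseq
  positivity

lemma nine_gseq (n : ℕ) : (9:ℝ)^n * gseq n = (2*n+1) * 8^n + 9^n * Real.sqrt (2/(n+2)) := by
  unfold gseq
  have h89 : ((8:ℝ)/9)^n * 9^n = 8^n := by
    rw [← mul_pow]
    norm_num
  rw [mul_add]
  congr 1
  rw [mul_comm ((9:ℝ)^n) _, mul_assoc, h89]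

lemma cnt_t_bound (n : ℕ) (t : ℤ) :
    (cntW n (fun v => xsum v n = t) : ℝ) ≤ 3^n * Real.sqrt (gseq n) := by
  set c : ℝ := (cntW n (fun v => xsum v n = t) : ℝ) with hc
  have hc0 : 0 ≤ c := by positivity
  have hc2 : c^2 ≤ (9:ℝ)^n * gseq n := by
    have h1 := cntW_sq_le (n := n) t
    have h2 : c * c ≤ (cntW (n+n) (fun w => xsum w (n+n) = 0) : ℝ) := by rw [hc]; exact_mod_cast h1
    have h3 := cntW_zero_real_bound n
    rw [nine_gseq]
    calc c^2 = c * c := sq c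
      _ ≤ _ := h2.trans h3
  have hR0 : (0:ℝ) ≤ 3^n * Real.sqrt (gseq n) := by positivity
  have hR2 : (3^n * Real.sqrt (gseq n))^2 = (9:ℝ)^n * gseq n := by
    rw [mul_pow, Real.sq_sqrt (gseq_nonneg n), ← pow_mul, Nat.mul_comm,
      pow_mul]
    norm_num
  calc c = Real.sqrt (c^2) := (Real.sqrt_sq hc0).symm
    _ ≤ Real.sqrt ((3^n * Real.sqrt (gseq n))^2) := Real.sqrt_le_sqrt (by rw [hR2]; exact hc2)
    _ = 3^n * Real.sqrt (gseq n) := Real.sqrt_sq hR0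

lemma survC_real_bound (z : ℤ × ℤ) (hx : 1 ≤ z.1) (n : ℕ) :
    (survC z n : ℝ) ≤ 2 * z.1 * (3^n * Real.sqrt (gseq n)) := by
  have h1 : survC z n ≤ ∑ t ∈ Finset.Icc (1 - z.1) z.1, cntW n (fun v => xsum v n = t) :=
    (survC_le_surv1 z hx n).trans (surv1_le_window hx n)
  have hcard : ((Finset.Icc (1 - z.1) z.1).card : ℝ) = 2 * z.1 := by
    rw [Int.card_Icc]
    have : z.1 + 1 - (1 - z.1) = 2 * z.1 := by ring
    rw [this]
    have h2 : (0:ℤ) ≤ 2 * z.1 := by omega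
    rw [show ((2 * z.1).toNat : ℝ) = (((2 * z.1).toNat : ℤ) : ℝ) by push_cast; ring,
      Int.toNat_of_nonneg h2]
    push_cast
    ring
  calc (survC z n : ℝ)
      ≤ ((∑ t ∈ Finset.Icc (1 - z.1) z.1, cntW n (fun v => xsum v n = t) : ℕ) : ℝ) := by
        exact_mod_cast h1
    _ = ∑ t ∈ Finset.Icc (1 - z.1) z.1, (cntW n (fun v => xsum v n = t) : ℝ) := by push_cast; rfl
    _ ≤ ∑ t ∈ Finset.Icc (1 - z.1) z.1, (3^n * Real.sqrt (gseq n)) :=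
        Finset.sum_le_sum (fun t _ => cnt_t_bound n t)
    _ = ((Finset.Icc (1 - z.1) z.1).card : ℝ) * (3^n * Real.sqrt (gseq n)) := by
        rw [Finset.sum_const, nsmul_eq_mul]
    _ = 2 * z.1 * (3^n * Real.sqrt (gseq n)) := by rw [hcard]

/-! ### identification of `firstHitCount` with `hitC` -/

def toF3 : ℤ × ℤ → Fin 3 := fun p => if p = (1,0) then 0 else if p = (-1,1) then 1 else 2

lemma estep_toF3 {p : ℤ × ℤ} (hp : p ∈ stepSet) : estep (toF3 p) = p := by
  simp only [stepSet, Set.mem_insert_iff, Set.mem_singleton_iff] at hp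
  rcases hp with rfl | rfl | rfl
  · simp [toF3, estep]
  · norm_num [toF3, estep]
  · norm_num [toF3, estep]
    rfl

lemma toF3_estep (a : Fin 3) : toF3 (estep a) = a := by
  fin_cases a
  · simp [toF3, estep]
  · norm_num [toF3, estep]
  · norm_num [toF3, estep]
    rfl

lemma estep_mem (a : Fin 3) : estep a ∈ stepSet := by
  fin_cases a
  · simp [stepSet, estep]
  · simp [stepSet, estep]
  · simp [stepSet, estep]

open scoped Classical in
lemma firstHitCount_eq (z : ℤ × ℤ) (P : ℤ × ℤ → Prop) (n : ℕ) :
    firstHitCount z P n =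
      cntW n (fun v => (∀ k < n, ¬ onBoundary (wpos z v k)) ∧ P (wpos z v n)) := by
  unfold firstHitCount
  have e : {w : Fin n → ℤ × ℤ //
      (∀ i, w i ∈ stepSet) ∧ (∀ k < n, ¬ onBoundary (walkPos z w k)) ∧ P (walkPos z w n)} ≃
      {v : Fin n → Fin 3 //
        (∀ k < n, ¬ onBoundary (wpos z v k)) ∧ P (wpos z v n)} := by
    refine ⟨fun w => ⟨toF3 ∘ w.1, ?_⟩, fun v => ⟨estep ∘ v.1, fun i => estep_mem _, v.2⟩,
      ?_, ?_⟩
    · have hw : estep ∘ (toF3 ∘ w.1) = w.1 := funext fun i => estep_toF3 (w.2.1 i)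
      have : wpos z (toF3 ∘ w.1) = walkPos z w.1 := by
        unfold wpos
        rw [hw]
      rw [this]
      exact w.2.2
    · rintro ⟨w, hw⟩
      apply Subtype.ext
      exact funext fun i => estep_toF3 (hw.1 i)
    · rintro ⟨v, hv⟩
      apply Subtype.ext
      exact funext fun i => toF3_estep (v i)
  rw [Nat.card_congr e, Nat.card_eq_fintype_card, Fintype.card_subtype]
  rw [cntW_eq_sum, Finset.card_filter]
  exact Finset.sum_congr rfl (fun v _ => by
    by_cases h : (∀ k < n, ¬onBoundary (wpos z v k)) ∧ P (wpos z v n) <;> simp [h])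
/-! ### limits -/

open Filter Topology

lemma gseq_tendsto_zero : Tendsto gseq atTop (nhds 0) := by
  have h1 : Tendsto (fun n : ℕ => ((n:ℝ)) * (8/9)^n) atTop (nhds 0) := by
    have hs : Summable (fun n : ℕ => ((n:ℝ))^1 * (8/9)^n) :=
      summable_pow_mul_geometric_of_norm_lt_one 1
        (by rw [Real.norm_eq_abs]; rw [abs_of_pos] <;> norm_num)
    have := hs.tendsto_atTop_zero
    simpa using this
  have h2 : Tendsto (fun n : ℕ => ((8:ℝ)/9)^n) atTop (nhds 0) :=
    tendsto_pow_atTop_nhds_zero_of_lt_one (by norm_num) (by norm_num)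
  have hpart1 : Tendsto (fun n : ℕ => (2*(n:ℝ)+1) * (8/9)^n) atTop (nhds 0) := by
    have h3 := (h1.const_mul 2).add h2
    rw [mul_zero, add_zero] at h3
    have heq : (fun n : ℕ => 2*((n:ℝ) * (8/9)^n) + (8/9)^n)
        = fun n : ℕ => (2*(n:ℝ)+1) * (8/9)^n := by
      funext n
      ring
    rwa [heq] at h3
  have hpart2 : Tendsto (fun n : ℕ => Real.sqrt (2/((n:ℝ)+2))) atTop (nhds 0) := by
    have hd : Tendsto (fun n : ℕ => (2:ℝ)/((n:ℝ)+2)) atTop (nhds 0) := by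
      have h := (tendsto_const_div_atTop_nhds_zero_nat (2:ℝ)).comp (tendsto_add_atTop_nat 2)
      have heq : ((fun n : ℕ => (2:ℝ) / n) ∘ (fun n : ℕ => n + 2))
          = fun n : ℕ => (2:ℝ)/((n:ℝ)+2) := by
        funext n
        simp only [Function.comp_apply]
        push_cast
        ring_nf
      rwa [heq] at h
    have hc : Tendsto Real.sqrt (nhds 0) (nhds 0) := by
      have := Real.continuous_sqrt.tendsto 0
      rwa [Real.sqrt_zero] at this
    exact hc.comp hd
  have h4 := hpart1.add hpart2
  rw [add_zero] at h4
  exact h4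

/-- The walk started at any interior point `z = (x₀,y₀)`, `x₀ ≥ 1`, `y₀ ≥ 1`, almost surely
hits the boundary in finite time: `P_z(τ < ∞) = 1`. -/
theorem walk_hits_boundary (z : ℤ × ℤ) (hx : 1 ≤ z.1) (hy : 1 ≤ z.2) :
    hitProb z onBoundary = 1 := by
  have hz : ¬ onBoundary z := by
    rintro (h | h) <;> omega
  set f : ℕ → ℝ := fun m => (1/3 : ℝ)^m * hitC z m with hf
  have hf0 : ∀ m, 0 ≤ f m := by
    intro m
    rw [hf]
    positivity
  have hps : ∀ n, ∑ m ∈ Finset.range (n+1), f m = 1 - survC z n / 3^n :=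
    partial_sum_eq z hz
  have hsurv_nonneg : ∀ n : ℕ, (0:ℝ) ≤ survC z n / 3^n := by
    intro n
    positivity
  have hb : ∀ n, ∑ m ∈ Finset.range n, f m ≤ 1 := by
    intro n
    cases n with
    | zero => simp
    | succ n =>
      rw [hps n]
      have := hsurv_nonneg n
      linarith
  have hsummable : Summable f := summable_of_sum_range_le hf0 hb
  -- survival probability tends to zero
  have hub : ∀ n : ℕ, (survC z n : ℝ) / 3^n ≤ 2 * z.1 * Real.sqrt (gseq n) := by
    intro n
    rw [div_le_iff₀ (by positivity)]
    have := survC_real_bound z hx n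
    calc (survC z n : ℝ) ≤ 2 * z.1 * (3^n * Real.sqrt (gseq n)) := this
      _ = 2 * z.1 * Real.sqrt (gseq n) * 3^n := by ring
  have hsq : Tendsto (fun n : ℕ => Real.sqrt (gseq n)) atTop (nhds 0) := by
    have hc : Tendsto Real.sqrt (nhds 0) (nhds 0) := by
      have := Real.continuous_sqrt.tendsto 0
      rwa [Real.sqrt_zero] at this
    exact hc.comp gseq_tendsto_zero
  have hub' : Tendsto (fun n : ℕ => 2 * (z.1:ℝ) * Real.sqrt (gseq n)) atTop (nhds 0) := by
    have := hsq.const_mul (2 * (z.1:ℝ))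
    rwa [mul_zero] at this
  have hsurv0 : Tendsto (fun n : ℕ => (survC z n : ℝ) / 3^n) atTop (nhds 0) :=
    squeeze_zero hsurv_nonneg hub hub'
  -- partial sums tend to 1
  have hpartial : Tendsto (fun n : ℕ => ∑ m ∈ Finset.range n, f m) atTop (nhds 1) := by
    rw [← tendsto_add_atTop_iff_nat 1]
    have : Tendsto (fun n : ℕ => 1 - (survC z n : ℝ) / 3^n) atTop (nhds 1) := by
      have := Tendsto.sub
        (tendsto_const_nhds : Tendsto (fun _ : ℕ => (1:ℝ)) atTop (nhds 1)) hsurv0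
      rwa [sub_zero] at this
    convert this using 2 with n
    exact hps n
  have hhs : HasSum f 1 := (hasSum_iff_tendsto_nat_of_nonneg hf0 1).2 hpartial
  unfold hitProb
  have : ∀ m : ℕ, (1/3 : ℝ)^m * firstHitCount z onBoundary m = f m := by
    intro m
    rw [hf, firstHitCount_eq]
    rfl
  rw [tsum_congr this]
  exact hhs.tsum_eq
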